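/- Let F be a field, d ≥ 0, A a finite subset of F^d, s a nonnegative integer, and p a polynomial in 2d variables over F of total degree at most 2s+1. Let M be the A × A matrix whose (a,b) entry is p(a,b) (the evaluation of p at the concatenated vector (a,b)). Then rank(M) ≤ 2·dim_s(A), where dim_s(A) is the dimension of the space of functions A → F that are restrictions to A of polynomials in d variables of total degree at most s. -/

import Mathlib

open MvPolynomial Matrix

/-- `dim_s(A)`: the dimension of the space of functions `A → F` that are restrictions to `A`
of `d`-variate polynomials of total degree at most `s`. -/
noncomputable def polyDim (F : Type*) [Field F] (d s : ℕ) (A : Finset (Fin d → F)) : ℕ :=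
  Module.finrank F (Submodule.span F
    {f : A → F | ∃ q : MvPolynomial (Fin d) F, q.totalDegree ≤ s ∧
      ∀ a : A, f a = eval (a : Fin d → F) q})

/-- If every monomial of `q` has `x`-degree at most `s`, then for fixed `b` the function
`a ↦ q(a,b)` is given by a `d`-variate polynomial of total degree at most `s`. -/
lemma clp_keyL {F : Type*} [Field F] {d s : ℕ} (q : MvPolynomial (Fin d ⊕ Fin d) F)
    (hq : ∀ v ∈ q.support, (∑ i : Fin d, v (Sum.inl i)) ≤ s) (b : Fin d → F) :
    ∃ r : MvPolynomial (Fin d) F, r.totalDegree ≤ s ∧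
      ∀ a : Fin d → F, eval (Sum.elim a b) q = eval a r := by
  classical
  refine ⟨∑ v ∈ q.support, monomial (Finsupp.equivFunOnFinite.symm (fun i => v (Sum.inl i)))
      (coeff v q * ∏ j : Fin d, (b j) ^ v (Sum.inr j)), ?_, ?_⟩
  · refine (totalDegree_finset_sum _ _).trans (Finset.sup_le fun v hv => ?_)
    refine (totalDegree_monomial_le _ _).trans ?_
    rw [Finsupp.sum_fintype _ _ (fun _ => rfl)]
    simpa using hq v hv
  · intro a
    rw [map_sum, eval_eq' (Sum.elim a b) q]
    refine Finset.sum_congr rfl fun v hv => ?_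
    rw [eval_monomial, Finsupp.prod_fintype _ _ (fun i => pow_zero (a i)),
      Fintype.prod_sum_type]
    simp only [Sum.elim_inl, Sum.elim_inr, Finsupp.coe_equivFunOnFinite_symm]
    ring

/-- Symmetric version: if every monomial of `q` has `y`-degree at most `s`, then for fixed `a`
the function `b ↦ q(a,b)` is given by a polynomial of total degree at most `s`. -/
lemma clp_keyR {F : Type*} [Field F] {d s : ℕ} (q : MvPolynomial (Fin d ⊕ Fin d) F)
    (hq : ∀ v ∈ q.support, (∑ j : Fin d, v (Sum.inr j)) ≤ s) (a : Fin d → F) :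
    ∃ r : MvPolynomial (Fin d) F, r.totalDegree ≤ s ∧
      ∀ b : Fin d → F, eval (Sum.elim a b) q = eval b r := by
  classical
  refine ⟨∑ v ∈ q.support, monomial (Finsupp.equivFunOnFinite.symm (fun j => v (Sum.inr j)))
      (coeff v q * ∏ i : Fin d, (a i) ^ v (Sum.inl i)), ?_, ?_⟩
  · refine (totalDegree_finset_sum _ _).trans (Finset.sup_le fun v hv => ?_)
    refine (totalDegree_monomial_le _ _).trans ?_
    rw [Finsupp.sum_fintype _ _ (fun _ => rfl)]
    simpa using hq v hv
  · intro b
    rw [map_sum, eval_eq' (Sum.elim a b) q]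
    refine Finset.sum_congr rfl fun v hv => ?_
    rw [eval_monomial, Finsupp.prod_fintype _ _ (fun j => pow_zero (b j)),
      Fintype.prod_sum_type]
    simp only [Sum.elim_inl, Sum.elim_inr, Finsupp.coe_equivFunOnFinite_symm]
    ring

/-- If every column of `M` lies in a submodule `V`, then `rank M ≤ finrank V`. -/
lemma clp_rank_le_of_cols {F : Type*} [Field F] {ι : Type*} [Fintype ι] [DecidableEq ι]
    (V : Submodule F (ι → F)) (M : Matrix ι ι F)
    (h : ∀ b, (fun a => M a b) ∈ V) : M.rank ≤ Module.finrank F V := by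
  have hle : LinearMap.range M.mulVecLin ≤ V := by
    rw [Matrix.range_mulVecLin]
    refine Submodule.span_le.2 ?_
    rintro _ ⟨b, rfl⟩
    exact h b
  exact Submodule.finrank_mono hle

/-- Part 1 of the generalized Croot–Lev–Pach lemma: if `p` is a `2d`-variate polynomial of
degree at most `2s+1`, then the `A × A` matrix with entries `p(a, b)` has rank at most
`2 · dim_s(A)`. -/
theorem rank_le_two_mul_polyDim (F : Type*) [Field F] (d s : ℕ) (A : Finset (Fin d → F))
    (p : MvPolynomial (Fin d ⊕ Fin d) F) (hp : p.totalDegree ≤ 2 * s + 1)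
    (M : Matrix A A F)
    (hM : ∀ a b : A, M a b = eval (Sum.elim (a : Fin d → F) (b : Fin d → F)) p) :
    M.rank ≤ 2 * polyDim F d s A := by
  classical
  set V : Submodule F (A → F) := Submodule.span F
    {f : A → F | ∃ q : MvPolynomial (Fin d) F, q.totalDegree ≤ s ∧
      ∀ a : A, f a = eval (a : Fin d → F) q} with hV
  set degX : ((Fin d ⊕ Fin d) →₀ ℕ) → ℕ := fun v => ∑ i : Fin d, v (Sum.inl i) with hdegX
  set degY : ((Fin d ⊕ Fin d) →₀ ℕ) → ℕ := fun v => ∑ j : Fin d, v (Sum.inr j) with hdegY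
  set p1 : MvPolynomial (Fin d ⊕ Fin d) F :=
    ∑ v ∈ p.support.filter (fun v => degX v ≤ s), monomial v (coeff v p) with hp1
  set p2 : MvPolynomial (Fin d ⊕ Fin d) F :=
    ∑ v ∈ p.support.filter (fun v => ¬ degX v ≤ s), monomial v (coeff v p) with hp2
  have hp12 : p1 + p2 = p := by
    rw [hp1, hp2, Finset.sum_filter_add_sum_filter_not]
    exact support_sum_monomial_coeff p
  -- coefficient description of p1 and p2
  have hcoeff : ∀ (P : ((Fin d ⊕ Fin d) →₀ ℕ) → Prop) [DecidablePred P]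
      (u : (Fin d ⊕ Fin d) →₀ ℕ),
      coeff u (∑ v ∈ p.support.filter P, monomial v (coeff v p)) =
        if u ∈ p.support.filter P then coeff u p else 0 := by
    intro P _ u
    rw [coeff_sum]
    simp only [coeff_monomial]
    rw [Finset.sum_ite_eq' (p.support.filter P) u (fun v => coeff v p)]
  have hsupp1 : ∀ u ∈ p1.support, degX u ≤ s := by
    intro u hu
    rw [mem_support_iff, hp1, hcoeff] at hu
    by_contra h
    simp [Finset.mem_filter, h] at hu
  have hsupp2 : ∀ u ∈ p2.support, degY u ≤ s := by
    intro u hu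
    rw [mem_support_iff, hp2, hcoeff] at hu
    split_ifs at hu with h
    · obtain ⟨hup, hX⟩ := Finset.mem_filter.mp h
      have htot : degX u + degY u ≤ 2 * s + 1 := by
        have := (le_totalDegree hup).trans hp
        rwa [Finsupp.sum_fintype _ _ (fun _ => rfl), Fintype.sum_sum_type] at this
      omega
    · exact absurd rfl hu
  -- decompose M
  set M1 : Matrix A A F := fun a b => eval (Sum.elim (a : Fin d → F) (b : Fin d → F)) p1
    with hM1
  set M2 : Matrix A A F := fun a b => eval (Sum.elim (a : Fin d → F) (b : Fin d → F)) p2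
    with hM2
  have hMsum : M = M1 + M2 := by
    ext a b
    rw [hM a b, ← hp12, map_add]
    rfl
  have hr1 : M1.rank ≤ polyDim F d s A := by
    refine clp_rank_le_of_cols V M1 fun b => ?_
    obtain ⟨r, hr, hre⟩ := clp_keyL p1 hsupp1 (b : Fin d → F)
    exact Submodule.subset_span ⟨r, hr, fun a => hre (a : Fin d → F)⟩
  have hr2 : M2.rank ≤ polyDim F d s A := by
    rw [← Matrix.rank_transpose]
    refine clp_rank_le_of_cols V M2ᵀ fun a => ?_
    obtain ⟨r, hr, hre⟩ := clp_keyR p2 hsupp2 (a : Fin d → F)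
    exact Submodule.subset_span ⟨r, hr, fun b => hre (b : Fin d → F)⟩
  -- subadditivity of rank
  have hadd : M.rank ≤ M1.rank + M2.rank := by
    have hle : LinearMap.range M.mulVecLin ≤
        LinearMap.range M1.mulVecLin ⊔ LinearMap.range M2.mulVecLin := by
      intro x hx
      obtain ⟨y, rfl⟩ := hx
      rw [hMsum]
      have : (M1 + M2).mulVecLin y = M1.mulVecLin y + M2.mulVecLin y := by
        simp [Matrix.mulVecLin, Matrix.add_mulVec]
      rw [this]
      exact Submodule.add_mem_sup (LinearMap.mem_range_self _ y) (LinearMap.mem_range_self _ y)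
    calc M.rank ≤ Module.finrank F
          ↥(LinearMap.range M1.mulVecLin ⊔ LinearMap.range M2.mulVecLin) :=
        Submodule.finrank_mono hle
      _ ≤ M1.rank + M2.rank := Submodule.finrank_add_le_finrank_add_finrank _ _
  calc M.rank ≤ M1.rank + M2.rank := hadd
    _ ≤ polyDim F d s A + polyDim F d s A := Nat.add_le_add hr1 hr2
    _ = 2 * polyDim F d s A := (two_mul _).symm
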